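/- arXiv:2009.14546 — 5 statements merged into one kernel-verified Lean document; each statement's English description precedes it below -/
import Mathlib

section
/- Let T > 0 and let a, b be finite nonnegative Borel measures on [0,T] with a absolutely continuous with respect to b and ∫_{[0,T]} s( (da/db)(t) ∣ 1 ) b(dt) < ∞. For δ > 0 set b_δ := b + δ·λ, where λ is Lebesgue measure on [0,T]. Then a is absolutely continuous with respect to b_δ for every δ > 0, and lim_{δ→0} ∫_{[0,T]} s( (da/db_δ)(t) ∣ 1 ) b_δ(dt) = ∫_{[0,T]} s( (da/db)(t) ∣ 1 ) b(dt). -/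
open MeasureTheory Set Filter
open scoped ENNReal

/-- The Boltzmann cost with reference value 1: `s(p∣1) = p·log p − p + 1`. -/
noncomputable def sOne (p : ℝ) : ℝ := p * Real.log p - p + 1

lemma sOne_nonneg {p : ℝ} (hp : 0 ≤ p) : 0 ≤ sOne p := by
  rcases eq_or_lt_of_le hp with h | h
  · simp [sOne, ← h]
  · have h1 : 1 - p⁻¹ ≤ Real.log p := Real.one_sub_inv_le_log_of_pos h
    have h2 : p * (1 - p⁻¹) ≤ p * Real.log p := mul_le_mul_of_nonneg_left h1 hp
    have h3 : p * (1 - p⁻¹) = p - 1 := by field_simp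
    simp only [sOne]
    linarith

lemma continuous_sOne : Continuous sOne := by
  have h := (Real.continuous_mul_log.sub continuous_id).add (continuous_const (y := (1:ℝ)))
  exact h

lemma mul_sOne_eq {A Q : ℝ} (hQ : 0 < Q) :
    Q * sOne (A / Q) = A * Real.log (A / Q) - A + Q := by
  simp only [sOne]
  field_simp

lemma S_nonneg {A B : ℝ} (hA : 0 ≤ A) (hB : 0 < B) :
    0 ≤ A * Real.log (A / B) - A + B := by
  rw [← mul_sOne_eq hB]
  exact mul_nonneg hB.le (sOne_nonneg (div_nonneg hA hB.le))

lemma S_mono {A Q Q' : ℝ} (hA : 0 ≤ A) (hQ : 0 < Q) (hQQ' : Q ≤ Q') (hAQ : A ≤ Q) :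
    A * Real.log (A / Q) - A + Q ≤ A * Real.log (A / Q') - A + Q' := by
  rcases eq_or_lt_of_le hA with h0 | hA'
  · simp only [← h0, zero_mul]; linarith
  · have hQ' : 0 < Q' := lt_of_lt_of_le hQ hQQ'
    have h1 : Real.log (A / Q) - Real.log (A / Q') = Real.log (Q' / Q) := by
      rw [Real.log_div hA'.ne' hQ.ne', Real.log_div hA'.ne' hQ'.ne',
        Real.log_div hQ'.ne' hQ.ne']
      ring
    have h2 : Real.log (Q' / Q) ≤ Q' / Q - 1 :=
      Real.log_le_sub_one_of_pos (by positivity)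
    have h3 : A * Real.log (Q' / Q) ≤ Q' - Q := by
      calc A * Real.log (Q' / Q) ≤ A * (Q' / Q - 1) :=
            mul_le_mul_of_nonneg_left h2 hA
        _ = (A / Q) * (Q' - Q) := by field_simp
        _ ≤ 1 * (Q' - Q) :=
            mul_le_mul_of_nonneg_right ((div_le_one hQ).mpr hAQ) (by linarith)
        _ = Q' - Q := one_mul _
    nlinarith [h3, h1]

lemma S_anti {A B Q : ℝ} (hB : 0 < B) (hBQ : B ≤ Q) (hQA : Q ≤ A) :
    A * Real.log (A / Q) - A + Q ≤ A * Real.log (A / B) - A + B := by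
  have hQ : 0 < Q := lt_of_lt_of_le hB hBQ
  have hA : 0 < A := lt_of_lt_of_le hQ hQA
  have h1 : Real.log (A / B) - Real.log (A / Q) = Real.log (Q / B) := by
    rw [Real.log_div hA.ne' hB.ne', Real.log_div hA.ne' hQ.ne',
      Real.log_div hQ.ne' hB.ne']
    ring
  have h2 : Real.log (B / Q) ≤ B / Q - 1 :=
    Real.log_le_sub_one_of_pos (by positivity)
  have h3 : Real.log (Q / B) = - Real.log (B / Q) := by
    rw [← Real.log_inv, inv_div]
  have h4 : 1 - B / Q ≤ Real.log (Q / B) := by rw [h3]; linarith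
  have h5 : Q - B ≤ A * Real.log (Q / B) := by
    calc Q - B = Q * (1 - B / Q) := by field_simp
      _ ≤ A * (1 - B / Q) := by
          apply mul_le_mul_of_nonneg_right hQA
          have : B / Q ≤ 1 := (div_le_one hQ).mpr hBQ
          linarith
      _ ≤ A * Real.log (Q / B) := mul_le_mul_of_nonneg_left h4 hA.le
  nlinarith [h5, h1]

lemma S_add_le {A B L : ℝ} (hA : 0 ≤ A) (hB : 0 < B) (hL : 0 ≤ L) :
    A * Real.log (A / (B + L)) - A + (B + L) ≤ (A * Real.log (A / B) - A + B) + L := by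
  have h : A * Real.log (A / (B + L)) ≤ A * Real.log (A / B) := by
    rcases eq_or_lt_of_le hA with h0 | hA'
    · simp [← h0]
    · apply mul_le_mul_of_nonneg_left _ hA
      apply Real.log_le_log (by positivity)
      gcongr
      linarith
  linarith

lemma key_bound {A B L δ : ℝ} (hA : 0 ≤ A) (hB : 0 ≤ B) (hL : 0 ≤ L)
    (hδ0 : 0 < δ) (hδ1 : δ ≤ 1) (hz : B = 0 → A = 0) :
    (B + δ * L) * sOne (A / (B + δ * L)) ≤ 2 * (B * sOne (A / B)) + L := by
  rcases eq_or_lt_of_le hB with hB0 | hBpos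
  · have hA0 : A = 0 := hz hB0.symm
    subst hA0
    rw [← hB0]
    simp [sOne]
    nlinarith
  · have hδL : 0 ≤ δ * L := mul_nonneg hδ0.le hL
    have hQpos : 0 < B + δ * L := by linarith
    have hQBL : B + δ * L ≤ B + L := by nlinarith
    rw [mul_sOne_eq hQpos, mul_sOne_eq hBpos]
    have hSB := S_nonneg hA hBpos
    rcases le_or_gt A (B + δ * L) with hAQ | hQA
    · have h1 := S_mono hA hQpos hQBL hAQ
      have h2 := S_add_le hA hBpos hL
      linarith
    · have h1 := S_anti hBpos (by linarith : B ≤ B + δ * L) hQA.le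
      linarith

/-- Let `a, b` be finite nonnegative Borel measures supported in `[0,T]` with `a ≪ b`
and `∫ s(da/db∣1) db < ∞`. Setting `b_δ := b + δ·λ` (with `λ` Lebesgue measure on
`[0,T]`), one has `a ≪ b_δ` for every `δ > 0` and
`∫ s(da/db_δ∣1) db_δ → ∫ s(da/db∣1) db` as `δ ↓ 0`. -/
theorem entropic_cost_approx_delta (T : ℝ) (hT : 0 < T) (a b : Measure ℝ)
    [IsFiniteMeasure a] [IsFiniteMeasure b]
    (ha : a (Set.Icc (0:ℝ) T)ᶜ = 0) (hb : b (Set.Icc (0:ℝ) T)ᶜ = 0)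
    (hab : a ≪ b)
    (hfin : (∫⁻ t, ENNReal.ofReal (sOne ((a.rnDeriv b t).toReal)) ∂b) ≠ ⊤) :
    (∀ δ : ℝ, 0 < δ →
      a ≪ (b + ENNReal.ofReal δ • (volume.restrict (Set.Icc (0:ℝ) T)))) ∧
    Tendsto
      (fun δ : ℝ =>
        ∫⁻ t, ENNReal.ofReal (sOne
            ((a.rnDeriv (b + ENNReal.ofReal δ • (volume.restrict (Set.Icc (0:ℝ) T))) t).toReal))
          ∂(b + ENNReal.ofReal δ • (volume.restrict (Set.Icc (0:ℝ) T))))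
      (nhdsWithin 0 (Set.Ioi 0))
      (nhds (∫⁻ t, ENNReal.ofReal (sOne ((a.rnDeriv b t).toReal)) ∂b)) := by
  have habs : ∀ δ : ℝ, 0 < δ →
      a ≪ (b + ENNReal.ofReal δ • (volume.restrict (Set.Icc (0:ℝ) T))) :=
    fun δ _ => hab.trans (Measure.absolutelyContinuous_of_le (Measure.le_add_right le_rfl))
  refine ⟨habs, ?_⟩
  set lam : Measure ℝ := volume.restrict (Set.Icc (0:ℝ) T) with hlam_def
  have hlam_univ : lam Set.univ < ⊤ := by
    rw [hlam_def, Measure.restrict_apply_univ, Real.volume_Icc]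
    exact ENNReal.ofReal_lt_top
  haveI hlamfin : IsFiniteMeasure lam := ⟨hlam_univ⟩
  set μ : Measure ℝ := b + lam with hμ_def
  have hb_mu : b ≪ μ := Measure.absolutelyContinuous_of_le (Measure.le_add_right le_rfl)
  have hl_mu : lam ≪ μ := Measure.absolutelyContinuous_of_le (Measure.le_add_left le_rfl)
  have ha_mu : a ≪ μ := hab.trans hb_mu
  set αf := a.rnDeriv μ with hαf
  set βf := b.rnDeriv μ with hβf
  set ℓf := lam.rnDeriv μ with hℓf
  have hαm : Measurable αf := Measure.measurable_rnDeriv a μ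
  have hβm : Measurable βf := Measure.measurable_rnDeriv b μ
  have hℓm : Measurable ℓf := Measure.measurable_rnDeriv lam μ
  set fLim : ℝ → ℝ≥0∞ :=
    fun t => βf t * ENNReal.ofReal (sOne ((αf t / βf t).toReal)) with hfLim
  have hfLim_meas : Measurable fLim :=
    hβm.mul (ENNReal.measurable_ofReal.comp (continuous_sOne.measurable.comp
      ((hαm.div hβm).ennreal_toReal)))
  -- Step B : rewrite the target integral over μ
  have hI : (∫⁻ t, ENNReal.ofReal (sOne ((a.rnDeriv b t).toReal)) ∂b)
      = ∫⁻ t, fLim t ∂μ := by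
    have hchain : a.rnDeriv b * b.rnDeriv μ =ᵐ[μ] a.rnDeriv μ :=
      Measure.rnDeriv_mul_rnDeriv hab
    have hfeq : (fun t => ENNReal.ofReal (sOne ((a.rnDeriv b t).toReal)))
        =ᵐ[b] fun t => ENNReal.ofReal (sOne ((αf t / βf t).toReal)) := by
      filter_upwards [hb_mu.ae_le hchain, Measure.rnDeriv_pos hb_mu,
        hb_mu.ae_le (Measure.rnDeriv_lt_top b μ)] with t h1 h2 h3
      simp only [Pi.mul_apply] at h1
      have : a.rnDeriv b t = αf t / βf t :=
        (ENNReal.eq_div_iff h2.ne' h3.ne).mpr (by rw [mul_comm]; exact h1)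
      rw [this]
    have hm : Measurable fun t => ENNReal.ofReal (sOne ((αf t / βf t).toReal)) := by
      exact ENNReal.measurable_ofReal.comp (continuous_sOne.measurable.comp
        ((hαm.div hβm).ennreal_toReal))
    rw [lintegral_congr_ae hfeq, ← lintegral_rnDeriv_mul hb_mu hm.aemeasurable]
  rw [hI]
  -- a.e. facts
  have hzero : ∀ᵐ t ∂μ, βf t = 0 → αf t = 0 := by
    have hNm : MeasurableSet {t | βf t = 0} := hβm (measurableSet_singleton 0)
    have hbN : b {t | βf t = 0} = 0 := by
      rw [← Measure.setLIntegral_rnDeriv hb_mu,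
        setLIntegral_congr_fun hNm (fun x hx => hx)]
      simp
    have haN : ∫⁻ t in {t | βf t = 0}, αf t ∂μ = 0 := by
      rw [Measure.setLIntegral_rnDeriv ha_mu]
      exact hab hbN
    have h0 : ∀ᵐ t ∂(μ.restrict {t | βf t = 0}), αf t = 0 := by
      have := (lintegral_eq_zero_iff hαm).mp haN
      filter_upwards [this] with t ht using ht
    have := (ae_restrict_iff' hNm).mp h0
    filter_upwards [this] with t ht hβ0 using ht hβ0
  have hαfin := Measure.rnDeriv_lt_top a μ
  have hβfin := Measure.rnDeriv_lt_top b μ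
  have hℓfin := Measure.rnDeriv_lt_top lam μ
  -- Step C : rewrite the approximating integrals over μ
  have hFH : ∀ᶠ δ in nhdsWithin (0:ℝ) (Set.Ioi 0),
      (∫⁻ t, ENNReal.ofReal (sOne ((a.rnDeriv (b + ENNReal.ofReal δ • lam) t).toReal))
        ∂(b + ENNReal.ofReal δ • lam))
      = ∫⁻ t, (βf t + ENNReal.ofReal δ * ℓf t) *
          ENNReal.ofReal (sOne ((αf t / (βf t + ENNReal.ofReal δ * ℓf t)).toReal)) ∂μ := by
    filter_upwards [self_mem_nhdsWithin] with δ hδ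
    have hδ0 : (0:ℝ) < δ := hδ
    set δ' : ℝ≥0∞ := ENNReal.ofReal δ with hδ'
    haveI : IsFiniteMeasure (δ' • lam) := by
      constructor
      rw [Measure.smul_apply, smul_eq_mul]
      exact ENNReal.mul_lt_top ENNReal.ofReal_lt_top hlam_univ
    set bδ : Measure ℝ := b + δ' • lam with hbδ
    have hbδ_mu : bδ ≪ μ := by
      have h2 : δ' • lam ≪ μ := Measure.smul_absolutelyContinuous.trans hl_mu
      intro s hs
      rw [hbδ, Measure.add_apply, hb_mu hs, h2 hs, add_zero]
    have hD : bδ.rnDeriv μ =ᵐ[μ] fun t => βf t + δ' * ℓf t := by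
      filter_upwards [Measure.rnDeriv_add b (δ' • lam) μ,
        Measure.rnDeriv_smul_left_of_ne_top lam μ (ENNReal.ofReal_ne_top : δ' ≠ ∞)]
        with t h1 h2
      rw [h1, Pi.add_apply, h2]
      simp [smul_eq_mul]
      rfl
    have hG : a.rnDeriv bδ =ᵐ[bδ] fun t => αf t / (βf t + δ' * ℓf t) := by
      filter_upwards [hbδ_mu.ae_le
          (Measure.rnDeriv_mul_rnDeriv (habs δ hδ0) : _ =ᵐ[μ] αf),
        Measure.rnDeriv_pos hbδ_mu, hbδ_mu.ae_le (Measure.rnDeriv_lt_top bδ μ),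
        hbδ_mu.ae_le hD] with t h1 h2 h3 h4
      simp only [Pi.mul_apply] at h1
      rw [← h4]
      exact (ENNReal.eq_div_iff h2.ne' h3.ne).mpr (by rw [mul_comm]; exact h1)
    have hmeasδ : Measurable fun t =>
        ENNReal.ofReal (sOne ((αf t / (βf t + δ' * ℓf t)).toReal)) :=
      ENNReal.measurable_ofReal.comp (continuous_sOne.measurable.comp
        ((hαm.div (hβm.add (measurable_const.mul hℓm))).ennreal_toReal))
    calc ∫⁻ t, ENNReal.ofReal (sOne ((a.rnDeriv bδ t).toReal)) ∂bδ
        = ∫⁻ t, ENNReal.ofReal (sOne ((αf t / (βf t + δ' * ℓf t)).toReal)) ∂bδ := by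
          apply lintegral_congr_ae
          filter_upwards [hG] with t ht
          rw [ht]
      _ = ∫⁻ t, bδ.rnDeriv μ t *
            ENNReal.ofReal (sOne ((αf t / (βf t + δ' * ℓf t)).toReal)) ∂μ :=
          (lintegral_rnDeriv_mul hbδ_mu hmeasδ.aemeasurable).symm
      _ = _ := by
          apply lintegral_congr_ae
          filter_upwards [hD] with t ht
          rw [ht]
  refine Filter.Tendsto.congr' (hFH.mono fun δ h => h.symm) ?_
  refine tendsto_lintegral_filter_of_dominated_convergence
    (fun t => 2 * fLim t + ℓf t) ?_ ?_ ?_ ?_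
  · -- measurability
    refine Filter.Eventually.of_forall (fun δ => ?_)
    exact (hβm.add (measurable_const.mul hℓm)).mul
      (ENNReal.measurable_ofReal.comp (continuous_sOne.measurable.comp
        ((hαm.div (hβm.add (measurable_const.mul hℓm))).ennreal_toReal)))
  · -- domination
    have hIoc : Set.Ioc (0:ℝ) 1 ∈ nhdsWithin (0:ℝ) (Set.Ioi 0) :=
      Ioc_mem_nhdsGT_of_mem ⟨le_refl 0, zero_lt_one⟩
    filter_upwards [hIoc] with δ hδ
    filter_upwards [hzero, hαfin, hβfin, hℓfin] with t hz hα hβ hℓ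
    by_cases hβ0 : βf t = 0
    · have hα0 : αf t = 0 := hz hβ0
      have hH : (βf t + ENNReal.ofReal δ * ℓf t) *
          ENNReal.ofReal (sOne ((αf t / (βf t + ENNReal.ofReal δ * ℓf t)).toReal))
          ≤ ℓf t := by
        rw [hα0, hβ0, ENNReal.zero_div, zero_add]
        norm_num [sOne]
        calc ENNReal.ofReal δ * ℓf t ≤ 1 * ℓf t :=
              mul_le_mul_left (ENNReal.ofReal_le_one.mpr hδ.2) _
          _ = ℓf t := one_mul _
      refine hH.trans ?_
      simp [hfLim, hβ0]
    · have hβpos : 0 < (βf t).toReal := ENNReal.toReal_pos hβ0 hβ.ne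
      set A := (αf t).toReal with hA
      set B := (βf t).toReal with hB
      set L := (ℓf t).toReal with hL
      have hA0 : 0 ≤ A := by rw [hA]; exact ENNReal.toReal_nonneg
      have hB0 : 0 ≤ B := by rw [hB]; exact ENNReal.toReal_nonneg
      have hL0 : 0 ≤ L := by rw [hL]; exact ENNReal.toReal_nonneg
      have hδL : 0 ≤ δ * L := mul_nonneg (le_of_lt hδ.1) hL0
      have hBo : ENNReal.ofReal B = βf t := by rw [hB]; exact ENNReal.ofReal_toReal hβ.ne
      have hLo : ENNReal.ofReal L = ℓf t := by rw [hL]; exact ENNReal.ofReal_toReal hℓ.ne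
      have hconv : βf t + ENNReal.ofReal δ * ℓf t = ENNReal.ofReal (B + δ * L) := by
        rw [ENNReal.ofReal_add hB0 hδL, ENNReal.ofReal_mul (le_of_lt hδ.1), hBo, hLo]
      have htoReal : ((αf t / (βf t + ENNReal.ofReal δ * ℓf t)).toReal) = A / (B + δ * L) := by
        rw [hconv, ENNReal.toReal_div, ENNReal.toReal_ofReal (add_nonneg hB0 hδL), ← hA]
      have hHt : (βf t + ENNReal.ofReal δ * ℓf t) *
          ENNReal.ofReal (sOne ((αf t / (βf t + ENNReal.ofReal δ * ℓf t)).toReal))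
          = ENNReal.ofReal ((B + δ * L) * sOne (A / (B + δ * L))) := by
        rw [htoReal, hconv, ENNReal.ofReal_mul (add_nonneg hB0 hδL)]
      have hfLimt : fLim t = ENNReal.ofReal (B * sOne (A / B)) := by
        show βf t * ENNReal.ofReal (sOne ((αf t / βf t).toReal)) = _
        rw [ENNReal.ofReal_mul hB0, hBo]
        congr 2
        rw [ENNReal.toReal_div, ← hA, ← hB]
      have hY : 0 ≤ B * sOne (A / B) :=
        mul_nonneg hB0 (sOne_nonneg (div_nonneg hA0 hB0))
      rw [hHt, hfLimt]
      calc ENNReal.ofReal ((B + δ * L) * sOne (A / (B + δ * L)))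
          ≤ ENNReal.ofReal (2 * (B * sOne (A / B)) + L) :=
            ENNReal.ofReal_le_ofReal
              (key_bound hA0 hB0 hL0 hδ.1 hδ.2
                (fun h => absurd h (by rw [hB] at h; exact absurd h hβpos.ne')))
        _ = 2 * ENNReal.ofReal (B * sOne (A / B)) + ℓf t := by
            rw [ENNReal.ofReal_add (by positivity) hL0,
              ENNReal.ofReal_mul (by norm_num), ENNReal.ofReal_ofNat, hLo]
  · -- finiteness of the bound
    have h1 : ∫⁻ t, (2 * fLim t + ℓf t) ∂μ
        = 2 * (∫⁻ t, fLim t ∂μ) + lam Set.univ := by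
      rw [lintegral_add_left (hfLim_meas.const_mul 2),
        lintegral_const_mul 2 hfLim_meas, Measure.lintegral_rnDeriv hl_mu]
    rw [h1]
    refine ENNReal.add_ne_top.mpr ⟨?_, hlam_univ.ne⟩
    exact ENNReal.mul_ne_top (by norm_num) (hI ▸ hfin)
  · -- a.e. pointwise convergence
    filter_upwards [hzero, hαfin, hβfin, hℓfin] with t hz hα hβ hℓ
    by_cases hβ0 : βf t = 0
    · have hα0 : αf t = 0 := hz hβ0
      have hEq : ∀ δ : ℝ, (βf t + ENNReal.ofReal δ * ℓf t) *
          ENNReal.ofReal (sOne ((αf t / (βf t + ENNReal.ofReal δ * ℓf t)).toReal))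
          = ENNReal.ofReal δ * ℓf t := by
        intro δ
        rw [hα0, hβ0, ENNReal.zero_div, zero_add]
        norm_num [sOne]
      have hflim0 : fLim t = 0 := by simp [hfLim, hβ0]
      rw [hflim0]
      simp only [hEq]
      have h0 : Tendsto (fun δ : ℝ => ENNReal.ofReal δ)
          (nhdsWithin 0 (Set.Ioi 0)) (nhds 0) := by
        have := (ENNReal.continuous_ofReal.tendsto 0).mono_left
          (nhdsWithin_le_nhds : nhdsWithin (0:ℝ) (Set.Ioi 0) ≤ nhds 0)
        simpa using this
      have := ENNReal.Tendsto.mul_const h0 (Or.inr hℓ.ne)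
      simpa using this
    · have hβpos : 0 < (βf t).toReal := ENNReal.toReal_pos hβ0 hβ.ne
      set A := (αf t).toReal with hA
      set B := (βf t).toReal with hB
      set L := (ℓf t).toReal with hL
      have hc1 : Continuous fun δ : ℝ => B + δ * L :=
        continuous_const.add (continuous_id.mul continuous_const)
      have hcd : ContinuousAt (fun δ : ℝ => A / (B + δ * L)) 0 := by
        apply ContinuousAt.div continuousAt_const hc1.continuousAt
        simpa using hβpos.ne'
      have hG : ContinuousAt (fun δ : ℝ => (B + δ * L) * sOne (A / (B + δ * L))) 0 :=
        hc1.continuousAt.mul (continuous_sOne.continuousAt.comp hcd)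
      have hGA : ContinuousAt
          (fun δ : ℝ => ENNReal.ofReal ((B + δ * L) * sOne (A / (B + δ * L)))) 0 :=
        ENNReal.continuous_ofReal.continuousAt.comp hG
      have hA0 : 0 ≤ A := by rw [hA]; exact ENNReal.toReal_nonneg
      have hB0 : 0 ≤ B := by rw [hB]; exact ENNReal.toReal_nonneg
      have hL0 : 0 ≤ L := by rw [hL]; exact ENNReal.toReal_nonneg
      have hBo : ENNReal.ofReal B = βf t := by rw [hB]; exact ENNReal.ofReal_toReal hβ.ne
      have hLo : ENNReal.ofReal L = ℓf t := by rw [hL]; exact ENNReal.ofReal_toReal hℓ.ne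
      have hfLimt : fLim t = ENNReal.ofReal (B * sOne (A / B)) := by
        show βf t * ENNReal.ofReal (sOne ((αf t / βf t).toReal)) = _
        rw [ENNReal.ofReal_mul hB0, hBo]
        congr 2
        rw [ENNReal.toReal_div, ← hA, ← hB]
      have htend : Tendsto
          (fun δ : ℝ => ENNReal.ofReal ((B + δ * L) * sOne (A / (B + δ * L))))
          (nhdsWithin 0 (Set.Ioi 0)) (nhds (ENNReal.ofReal (B * sOne (A / B)))) := by
        have := hGA.tendsto.mono_left
          (nhdsWithin_le_nhds : nhdsWithin (0:ℝ) (Set.Ioi 0) ≤ nhds 0)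
        simpa using this
      rw [hfLimt]
      refine Filter.Tendsto.congr' ?_ htend
      filter_upwards [self_mem_nhdsWithin] with δ hδ
      have hδ0 : (0:ℝ) < δ := hδ
      have hδL : 0 ≤ δ * L := mul_nonneg hδ0.le hL0
      have hconv : βf t + ENNReal.ofReal δ * ℓf t = ENNReal.ofReal (B + δ * L) := by
        rw [ENNReal.ofReal_add hB0 hδL, ENNReal.ofReal_mul hδ0.le, hBo, hLo]
      have htoReal : ((αf t / (βf t + ENNReal.ofReal δ * ℓf t)).toReal) = A / (B + δ * L) := by
        rw [hconv, ENNReal.toReal_div, ENNReal.toReal_ofReal (add_nonneg hB0 hδL), ← hA]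
      rw [htoReal, hconv, ENNReal.ofReal_mul (add_nonneg hB0 hδL)]
end

section
/- Let T > 0 and let (f_n)_{n≥1} be a sequence of continuous real-valued functions on [0,T] such that (i) sup_{n≥1} ‖f_n‖_∞ < ∞, and (ii) there exists a non-decreasing function ω : [0,∞) → [0,∞) with lim_{σ↓0} ω(σ) = 0 such that for every σ > 0 one has limsup_{n→∞} sup_{|t−s|<σ} |f_n(t) − f_n(s)| ≤ ω(σ). Then there exists a subsequence (f_{n_k}) that converges uniformly on [0,T]. -/
open Filter Set

/-- Arzelà–Ascoli for asymptotically uniformly equicontinuous sequences: if a sequence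
of continuous functions on `[0,T]` is uniformly bounded and there is a non-decreasing
modulus `ω : [0,∞) → [0,∞)` with `ω(σ) → 0` as `σ ↓ 0` such that for every `σ > 0`,
`limsup_{n→∞} sup_{|t−s|<σ} |f_n(t) − f_n(s)| ≤ ω(σ)`, then some subsequence converges
uniformly on `[0,T]`. -/
theorem arzela_ascoli_asymptotic (T : ℝ) (hT : 0 < T) (f : ℕ → ℝ → ℝ)
    (hcont : ∀ n, ContinuousOn (f n) (Icc 0 T))
    (hbdd : ∃ M : ℝ, ∀ n, ∀ t ∈ Icc (0:ℝ) T, |f n t| ≤ M)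
    (ω : ℝ → ℝ) (hω0 : ∀ σ, 0 ≤ σ → 0 ≤ ω σ) (hωmono : MonotoneOn ω (Ici 0))
    (hωlim : Tendsto ω (nhdsWithin 0 (Ioi 0)) (nhds 0))
    (hequi : ∀ σ : ℝ, 0 < σ →
      Filter.limsup (fun n =>
          sSup {d : ℝ | ∃ t ∈ Icc (0:ℝ) T, ∃ s ∈ Icc (0:ℝ) T,
            |t - s| < σ ∧ d = |f n t - f n s|}) atTop ≤ ω σ) :
    ∃ φ : ℕ → ℕ, StrictMono φ ∧ ∃ g : ℝ → ℝ,
      TendstoUniformlyOn (fun k => f (φ k)) g atTop (Icc 0 T) := by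
  obtain ⟨M, hM⟩ := hbdd
  have h0T : (0:ℝ) ∈ Icc 0 T := ⟨le_refl 0, hT.le⟩
  -- the restricted bounded continuous functions
  set K := Icc (0:ℝ) T with hK
  letI : CompactSpace K := isCompact_iff_compactSpace.mp isCompact_Icc
  set F : ℕ → BoundedContinuousFunction K ℝ := fun n =>
    BoundedContinuousFunction.mkOfCompact ⟨K.restrict (f n), (hcont n).restrict⟩ with hF
  have hFval : ∀ n (x : K), F n x = f n x := fun n x => rfl
  -- oscillation sets are nonempty and bounded above
  have hSnonempty : ∀ n (σ : ℝ), 0 < σ →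
      ((0:ℝ) ∈ {d : ℝ | ∃ t ∈ Icc (0:ℝ) T, ∃ s ∈ Icc (0:ℝ) T,
        |t - s| < σ ∧ d = |f n t - f n s|}) := by
    intro n σ hσ
    exact ⟨0, h0T, 0, h0T, by simpa using hσ, by simp⟩
  have hSle : ∀ (n : ℕ) (σ : ℝ), ∀ d ∈ {d : ℝ | ∃ t ∈ Icc (0:ℝ) T, ∃ s ∈ Icc (0:ℝ) T,
      |t - s| < σ ∧ d = |f n t - f n s|}, d ≤ 2 * M := by
    rintro n σ d ⟨t, ht, s, hs, -, rfl⟩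
    calc |f n t - f n s| ≤ |f n t| + |f n s| := abs_sub _ _
      _ ≤ M + M := add_le_add (hM n t ht) (hM n s hs)
      _ = 2 * M := by ring
  have hSbdd : ∀ n (σ : ℝ), BddAbove {d : ℝ | ∃ t ∈ Icc (0:ℝ) T, ∃ s ∈ Icc (0:ℝ) T,
      |t - s| < σ ∧ d = |f n t - f n s|} := fun n σ => ⟨2 * M, hSle n σ⟩
  -- uniform equicontinuity of the family `F`
  have hUEC : ∀ ε : ℝ, 0 < ε → ∃ δ > 0, ∀ x y : K, dist x y < δ →
      ∀ n, dist (F n x) (F n y) < ε := by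
    intro ε hε
    -- pick σ with ω σ < ε/2
    have : ∀ᶠ σ in nhdsWithin (0:ℝ) (Ioi 0), ω σ < ε / 2 := by
      have := hωlim.eventually (gt_mem_nhds (show (0:ℝ) < ε / 2 by linarith))
      exact this
    obtain ⟨σ, hσpos, hσlt⟩ : ∃ σ : ℝ, 0 < σ ∧ ω σ < ε / 2 := by
      obtain ⟨σ, hσ⟩ := (this.and (eventually_mem_nhdsWithin)).exists
      exact ⟨σ, hσ.2, hσ.1⟩
    -- eventually, sup of oscillations < ε/2
    have hlim : limsup (fun n => sSup {d : ℝ | ∃ t ∈ Icc (0:ℝ) T, ∃ s ∈ Icc (0:ℝ) T,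
        |t - s| < σ ∧ d = |f n t - f n s|}) atTop < ε / 2 :=
      lt_of_le_of_lt (hequi σ hσpos) hσlt
    have hbound : IsBoundedUnder (· ≤ ·) atTop (fun n : ℕ =>
        sSup {d : ℝ | ∃ t ∈ Icc (0:ℝ) T, ∃ s ∈ Icc (0:ℝ) T,
          |t - s| < σ ∧ d = |f n t - f n s|}) := by
      refine Filter.isBoundedUnder_of ⟨2 * M, fun n => ?_⟩
      exact csSup_le ⟨0, hSnonempty n σ hσpos⟩ fun d hd => hSle n σ d hd
    have hev : ∀ᶠ n in atTop, sSup {d : ℝ | ∃ t ∈ Icc (0:ℝ) T, ∃ s ∈ Icc (0:ℝ) T,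
        |t - s| < σ ∧ d = |f n t - f n s|} < ε / 2 :=
      eventually_lt_of_limsup_lt hlim hbound
    obtain ⟨N, hN⟩ := hev.exists_forall_of_atTop
    -- each restricted function is uniformly continuous
    have hUC : ∀ n, ∃ δ > 0, ∀ x y : K, dist x y < δ → dist (f n x) (f n y) < ε := by
      intro n
      have : UniformContinuous (K.restrict (f n)) :=
        CompactSpace.uniformContinuous_of_continuous (hcont n).restrict
      rw [Metric.uniformContinuous_iff] at this
      obtain ⟨δ, hδ, h⟩ := this ε hε
      exact ⟨δ, hδ, fun x y hxy => h hxy⟩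
    choose δ hδpos hδ using hUC
    refine ⟨min σ ((Finset.range (N + 1)).inf' (by simp) δ), ?_, ?_⟩
    · exact lt_min hσpos ((Finset.lt_inf'_iff _).2 fun n _ => hδpos n)
    · intro x y hxy n
      rcases le_or_gt n N with hn | hn
      · have : dist x y < δ n :=
          lt_of_lt_of_le (lt_of_lt_of_le hxy (min_le_right _ _))
            (Finset.inf'_le _ (Finset.mem_range.2 (by omega)))
        exact hδ n x y this
      · have hdxy : |(x : ℝ) - (y : ℝ)| < σ :=
          lt_of_lt_of_le hxy (min_le_left _ _)
        have hmem : |f n x - f n y| ∈ {d : ℝ | ∃ t ∈ Icc (0:ℝ) T, ∃ s ∈ Icc (0:ℝ) T,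
            |t - s| < σ ∧ d = |f n t - f n s|} :=
          ⟨x, x.2, y, y.2, hdxy, rfl⟩
        have : |f n x - f n y| ≤ sSup {d : ℝ | ∃ t ∈ Icc (0:ℝ) T, ∃ s ∈ Icc (0:ℝ) T,
            |t - s| < σ ∧ d = |f n t - f n s|} := le_csSup (hSbdd n σ) hmem
        calc dist (F n x) (F n y) = |f n x - f n y| := rfl
          _ ≤ _ := this
          _ < ε / 2 := hN n hn.le
          _ < ε := by linarith
  -- compactness of the closure of the range of `F`
  have hcomp : IsCompact (closure (Set.range F)) := by
    apply BoundedContinuousFunction.arzela_ascoli (Icc (-M) M) isCompact_Icc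
    · rintro g x ⟨n, rfl⟩
      have := hM n x x.2
      exact abs_le.1 this |>.imp (fun h => h) (fun h => h) |> fun h => ⟨h.1, h.2⟩
    · -- equicontinuity of the coercion from `range F`
      apply UniformEquicontinuous.equicontinuous
      rw [Metric.uniformEquicontinuous_iff]
      intro ε hε
      obtain ⟨δ, hδpos, h⟩ := hUEC ε hε
      refine ⟨δ, hδpos, fun x y hxy i => ?_⟩
      obtain ⟨n, hn⟩ := i.2
      rw [← hn]
      exact h x y hxy n
  -- extract a convergent subsequence
  have hmem : ∀ n, F n ∈ closure (Set.range F) := fun n =>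
    subset_closure (Set.mem_range_self n)
  obtain ⟨G, -, φ, hφ, hconv⟩ := hcomp.tendsto_subseq hmem
  refine ⟨φ, hφ, fun t => if h : t ∈ Icc (0:ℝ) T then G ⟨t, h⟩ else 0, ?_⟩
  rw [tendstoUniformlyOn_iff_tendstoUniformly_comp_coe]
  have : TendstoUniformly (fun k => (F (φ k) : K → ℝ)) (G : K → ℝ) atTop :=
    BoundedContinuousFunction.tendsto_iff_tendstoUniformly.1 hconv
  convert this using 2 with k x
  · rfl
  · ext x; exact dif_pos x.2
end

section
/- Let V be a nonempty finite set, let κ : V × V → [0,∞) with κ(x,x) = 0 for all x, and let E : V → [0,∞). Define the matrix M ∈ ℝ^{V×V} by M_{xy} := κ(y,x) for x ≠ y and M_{xx} := −Σ_{y'∈V} κ(x,y') − E_x. Assume that for every x ∈ V there exist k ≥ 0 and x = x₀, x₁, …, x_k ∈ V with κ(x_i, x_{i+1}) > 0 for all 0 ≤ i < k and E_{x_k} > 0. Then M is invertible. -/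
open Matrix BigOperators

/-- Invertibility of the (transposed) sub-generator of a Markov jump process with
killing: if `M x y = κ(y,x)` for `x ≠ y` and `M x x = −Σ_{y'} κ(x,y') − E x`, and from
every state a state with positive killing rate `E` is reachable through jumps of
positive rate, then `M` is invertible. -/
theorem subgenerator_invertible {V : Type*} [Fintype V] [DecidableEq V] [Nonempty V]
    (κ : V × V → ℝ) (hκ : ∀ p, 0 ≤ κ p) (hκdiag : ∀ x, κ (x, x) = 0)
    (E : V → ℝ) (hE : ∀ x, 0 ≤ E x)
    (M : Matrix V V ℝ)
    (hM : ∀ x y, M x y = if x = y then -(∑ y', κ (x, y')) - E x else κ (y, x))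
    (hreach : ∀ x : V, ∃ (k : ℕ) (c : ℕ → V), c 0 = x ∧
      (∀ i < k, 0 < κ (c i, c (i + 1))) ∧ 0 < E (c k)) :
    IsUnit M := by
  rw [Matrix.isUnit_iff_isUnit_det, isUnit_iff_ne_zero]
  rw [← Matrix.det_transpose]
  intro hdet
  obtain ⟨v, hv, hv0⟩ := (Matrix.exists_mulVec_eq_zero_iff).2 hdet
  -- choose sign so that max is positive
  obtain ⟨x₁, hx₁⟩ : ∃ x, v x ≠ 0 := by
    by_contra h
    push_neg at h
    exact hv (funext h)
  set w : V → ℝ := if 0 < v x₁ then v else -v with hw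
  have hw0 : Mᵀ *ᵥ w = 0 := by
    rw [hw]
    split
    · exact hv0
    · rw [Matrix.mulVec_neg, hv0, neg_zero]
  have hwx₁ : 0 < w x₁ := by
    rw [hw]
    rcases lt_or_gt_of_ne hx₁ with h | h
    · simp [not_lt.2 h.le, h]
    · simp [h]
  set m : ℝ := Finset.univ.sup' Finset.univ_nonempty w with hm
  have hle : ∀ y, w y ≤ m := fun y => Finset.le_sup' w (Finset.mem_univ y)
  have hmpos : 0 < m := lt_of_lt_of_le hwx₁ (hle x₁)
  obtain ⟨x₀, _, hx₀⟩ := Finset.exists_mem_eq_sup' (Finset.univ_nonempty (α := V)) w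
  -- maximum principle
  have key : ∀ x, w x = m → E x = 0 ∧ ∀ y, 0 < κ (x, y) → w y = m := by
    intro x hx
    have hrow : ∑ y, M y x * w y = 0 := by
      have := congrFun hw0 x
      simpa [Matrix.mulVec, dotProduct] using this
    have hsum : ∑ y ∈ Finset.univ.erase x, κ (x, y) * (m - w y) = -(E x * m) := by
      have h1 : ∑ y ∈ Finset.univ.erase x, κ (x, y) * w y
          = (∑ y', κ (x, y') + E x) * m := by
        have := Finset.add_sum_erase Finset.univ (fun y => M y x * w y)
          (Finset.mem_univ x)
        rw [← this] at hrow
        have hdiag : M x x * w x = (-(∑ y', κ (x, y')) - E x) * m := by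
          rw [hM x x, if_pos rfl, hx]
        have hoff : ∀ y ∈ Finset.univ.erase x, M y x * w y = κ (x, y) * w y := by
          intro y hy
          rw [hM y x, if_neg (Finset.ne_of_mem_erase hy)]
        rw [Finset.sum_congr rfl hoff, hdiag] at hrow
        linarith
      have h2 : ∑ y ∈ Finset.univ.erase x, κ (x, y) * m = (∑ y', κ (x, y')) * m := by
        rw [← Finset.sum_mul]
        congr 1
        rw [Finset.sum_erase]
        rw [hκdiag]
      rw [Finset.sum_congr rfl (fun y _ => mul_sub (κ (x, y)) m (w y)),
        Finset.sum_sub_distrib, h1, h2]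
      ring
    have hnonneg : ∀ y ∈ Finset.univ.erase x, 0 ≤ κ (x, y) * (m - w y) :=
      fun y _ => mul_nonneg (hκ _) (sub_nonneg.2 (hle y))
    have hsle : -(E x * m) ≤ 0 := by
      have : (0:ℝ) ≤ -(E x * m) := hsum ▸ Finset.sum_nonneg hnonneg
      nlinarith [mul_nonneg (hE x) hmpos.le]
    have hEx : E x = 0 := by
      have h0 : (0:ℝ) ≤ -(E x * m) := hsum ▸ Finset.sum_nonneg hnonneg
      nlinarith [hE x, hmpos]
    refine ⟨hEx, fun y hy => ?_⟩
    by_cases hxy : y = x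
    · rw [hxy]; exact hx
    · have hz : ∑ y ∈ Finset.univ.erase x, κ (x, y) * (m - w y) = 0 := by
        rw [hsum, hEx]; ring
      have := (Finset.sum_eq_zero_iff_of_nonneg hnonneg).1 hz y
        (Finset.mem_erase.2 ⟨hxy, Finset.mem_univ y⟩)
      have hmy : m - w y = 0 := by
        rcases mul_eq_zero.1 this with h | h
        · exact absurd h (ne_of_gt hy)
        · exact h
      linarith
  -- propagate along the reachability path
  obtain ⟨k, c, hc0, hcstep, hck⟩ := hreach x₀
  have hpath : ∀ i ≤ k, w (c i) = m := by
    intro i hi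
    induction i with
    | zero => rw [hc0]; exact hx₀.symm
    | succ n ih =>
      have hn : n ≤ k := Nat.le_of_succ_le hi
      have := key (c n) (ih hn)
      exact this.2 (c (n+1)) (hcstep n (Nat.lt_of_succ_le hi))
  have := (key (c k) (hpath k le_rfl)).1
  linarith
end

section
/- Under the fast–slow network hypotheses, every fast edge whose source lies in V₀ also has its target in V₀, and moreover the target node has at least one outgoing fast edge: for every r ∈ R_fast with r₋ ∈ V₀ one has r₊ ∈ V₀ and there exists r' ∈ R_fast with r'₋ = r₊. -/
open Filter BigOperators

/-- Fast–slow network: every fast edge with source in `V₀` has its target in `V₀`, and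
the target has at least one outgoing fast edge. Here `(V,R)` is a finite directed graph
with edge partition `R = R_slow ⊔ R_fast`, rates `κ > 0` scaled by `1/ε` on fast edges,
and `π^ε` is the normalised stationary distribution, with `π^ε_x → π_x > 0` on `V₀` and
`π^ε_x/ε → π̃_x > 0` on `V₁`. -/
theorem fast_edge_from_V0_lands_in_V0
    {V R : Type*} [Fintype V] [Fintype R] [DecidableEq V] [DecidableEq R]
    (src tgt : R → V)
    (Rslow Rfast : Finset R)
    (hRdisj : Disjoint Rslow Rfast) (hRunion : Rslow ∪ Rfast = Finset.univ)
    (κ : R → ℝ) (hκ : ∀ r, 0 < κ r)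
    (πeps : ℝ → V → ℝ)
    (hπpos : ∀ ε : ℝ, 0 < ε → ∀ x, 0 < πeps ε x)
    (hnorm : ∀ ε : ℝ, 0 < ε → ∑ x, πeps ε x = 1)
    (hstat : ∀ ε : ℝ, 0 < ε → ∀ x : V,
      πeps ε x * (∑ r ∈ Finset.univ.filter (fun r => src r = x),
          (if r ∈ Rslow then κ r else κ r / ε))
        = ∑ r ∈ Finset.univ.filter (fun r => tgt r = x),
            (if r ∈ Rslow then κ r else κ r / ε) * πeps ε (src r))
    (V0 V1 : Finset V)
    (hVdisj : Disjoint V0 V1) (hVunion : V0 ∪ V1 = Finset.univ)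
    (πlim πtilde : V → ℝ)
    (hV0 : ∀ x ∈ V0, 0 < πlim x ∧
      Tendsto (fun ε => πeps ε x) (nhdsWithin 0 (Set.Ioi 0)) (nhds (πlim x)))
    (hV1 : ∀ x ∈ V1, 0 < πtilde x ∧
      Tendsto (fun ε => πeps ε x / ε) (nhdsWithin 0 (Set.Ioi 0)) (nhds (πtilde x))) :
    ∀ r ∈ Rfast, src r ∈ V0 →
      tgt r ∈ V0 ∧ ∃ r' ∈ Rfast, src r' = tgt r := by
  intro r hr hsrc
  obtain ⟨hπsrc_pos, hπsrc_lim⟩ := hV0 _ hsrc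
  set x := tgt r with hxdef
  -- contradiction engine
  have key : ∀ (G : ℝ → ℝ), Tendsto G (nhdsWithin 0 (Set.Ioi 0)) (nhds 0) →
      (∀ᶠ ε in nhdsWithin 0 (Set.Ioi 0),
        κ r * πeps ε (src r) ≤ G ε) → False := by
    intro G hG hle
    have hlim : Tendsto (fun ε => κ r * πeps ε (src r)) (nhdsWithin 0 (Set.Ioi 0))
        (nhds (κ r * πlim (src r))) := hπsrc_lim.const_mul _
    have h := le_of_tendsto_of_tendsto hlim hG hle
    nlinarith [hκ r]
  -- lower bound: κ r * πeps ε (src r) ≤ πeps ε x * ∑ (if slow then ε*κ else κ)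
  have hlow : ∀ ε : ℝ, 0 < ε →
      κ r * πeps ε (src r) ≤
      πeps ε x * ∑ r' ∈ Finset.univ.filter (fun r' => src r' = x),
        (if r' ∈ Rslow then ε * κ r' else κ r') := by
    intro ε hε
    have hεne : ε ≠ 0 := ne_of_gt hε
    have h1 := hstat ε hε x
    have hrfilt : r ∈ Finset.univ.filter (fun r' => tgt r' = x) := by
      simp [hxdef]
    have hrns : r ∉ Rslow := fun h => (Finset.disjoint_left.mp hRdisj h) hr
    have h2 : κ r * πeps ε (src r) ≤
        ε * ∑ r' ∈ Finset.univ.filter (fun r' => tgt r' = x),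
          (if r' ∈ Rslow then κ r' else κ r' / ε) * πeps ε (src r') := by
      rw [Finset.mul_sum]
      have hterms : ∀ i ∈ Finset.univ.filter (fun r' => tgt r' = x),
          0 ≤ ε * ((if i ∈ Rslow then κ i else κ i / ε) * πeps ε (src i)) := by
        intro i _
        have hκi : 0 ≤ (if i ∈ Rslow then κ i else κ i / ε) := by
          split
          · exact (hκ i).le
          · exact (div_pos (hκ i) hε).le
        exact mul_nonneg hε.le (mul_nonneg hκi (hπpos ε hε (src i)).le)
      have hs := Finset.single_le_sum
        (f := fun r' => ε * ((if r' ∈ Rslow then κ r' else κ r' / ε) * πeps ε (src r')))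
        hterms hrfilt
      calc κ r * πeps ε (src r)
          = ε * ((if r ∈ Rslow then κ r else κ r / ε) * πeps ε (src r)) := by
            rw [if_neg hrns]; field_simp
        _ ≤ _ := hs
    calc κ r * πeps ε (src r) ≤ _ := h2
      _ = ε * (πeps ε x * ∑ r' ∈ Finset.univ.filter (fun r' => src r' = x),
            (if r' ∈ Rslow then κ r' else κ r' / ε)) := by rw [h1]
      _ = _ := by
        rw [mul_left_comm]
        congr 1
        rw [Finset.mul_sum]
        refine Finset.sum_congr rfl fun i _ => ?_
        split
        · rfl
        · field_simp
  have hzero : Tendsto (fun ε : ℝ => ε) (nhdsWithin 0 (Set.Ioi 0)) (nhds 0) :=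
    tendsto_id.mono_left nhdsWithin_le_nhds
  -- first conjunct: x ∈ V0
  have hxV0 : x ∈ V0 := by
    by_contra hxn
    have hxV1 : x ∈ V1 := by
      have : x ∈ V0 ∪ V1 := hVunion ▸ Finset.mem_univ x
      rcases Finset.mem_union.mp this with h | h
      · exact absurd h hxn
      · exact h
    obtain ⟨hπt_pos, hπt_lim⟩ := hV1 _ hxV1
    have hπx0 : Tendsto (fun ε => πeps ε x) (nhdsWithin 0 (Set.Ioi 0)) (nhds 0) := by
      have : Tendsto (fun ε => (πeps ε x / ε) * ε) (nhdsWithin 0 (Set.Ioi 0))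
          (nhds (πtilde x * 0)) := hπt_lim.mul hzero
      rw [mul_zero] at this
      refine this.congr' ?_
      filter_upwards [self_mem_nhdsWithin] with ε hε
      exact div_mul_cancel₀ _ (ne_of_gt hε)
    set C : ℝ := ∑ r' ∈ Finset.univ.filter (fun r' => src r' = x), κ r' with hC
    refine key (fun ε => πeps ε x * C) ?_ ?_
    · have := hπx0.mul_const C
      simpa using this
    · have hIoo : Set.Ioo (0:ℝ) 1 ∈ nhdsWithin (0:ℝ) (Set.Ioi 0) :=
        Ioo_mem_nhdsGT_of_mem (by constructor <;> norm_num)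
      filter_upwards [hIoo] with ε hε
      refine (hlow ε hε.1).trans ?_
      refine mul_le_mul_of_nonneg_left ?_ (le_of_lt (hπpos ε hε.1 x))
      refine Finset.sum_le_sum fun i _ => ?_
      split
      · nlinarith [hκ i, hε.1, hε.2]
      · exact le_rfl
  refine ⟨hxV0, ?_⟩
  -- second conjunct: exists fast outgoing edge
  by_contra hno
  push_neg at hno
  have hallslow : ∀ r' : R, src r' = x → r' ∈ Rslow := by
    intro r' hr'
    have : r' ∈ Rslow ∪ Rfast := hRunion ▸ Finset.mem_univ r'
    rcases Finset.mem_union.mp this with h | h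
    · exact h
    · exact absurd hr' (hno r' h)
  obtain ⟨hπx_pos, hπx_lim⟩ := hV0 _ hxV0
  set C : ℝ := ∑ r' ∈ Finset.univ.filter (fun r' => src r' = x), κ r' with hC
  refine key (fun ε => πeps ε x * (ε * C)) ?_ ?_
  · have : Tendsto (fun ε => πeps ε x * (ε * C)) (nhdsWithin 0 (Set.Ioi 0))
        (nhds (πlim x * (0 * C))) := hπx_lim.mul (hzero.mul_const C)
    simpa using this
  · filter_upwards [self_mem_nhdsWithin] with ε hε
    refine (hlow ε hε).trans ?_
    refine le_of_eq ?_
    congr 1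
    rw [hC, Finset.mul_sum]
    refine Finset.sum_congr rfl fun i hi => ?_
    rw [if_pos (hallslow i (Finset.mem_filter.mp hi).2)]
end

section
/- Under the fast–slow network hypotheses, define R_fcyc := { r ∈ R_fast : r₋ ∈ V₀ }. Then the subgraph of fast edges emanating from V₀ consists purely of cycles: for every r ∈ R_fcyc there exist K ≥ 1 and edges r¹, …, r^K ∈ R_fcyc with r¹ = r, r^k₊ = r^{k+1}₋ for all 1 ≤ k < K, and r^K₊ = r¹₋. -/
open Filter BigOperators

private lemma reach_path {V R : Type*} (src tgt : R → V) (W : R → ℝ) {a b : V}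
    (h : Relation.ReflTransGen (fun u v => ∃ e, 0 < W e ∧ src e = u ∧ tgt e = v) a b) :
    a = b ∨ ∃ K : ℕ, 1 ≤ K ∧ ∃ c : ℕ → R, (∀ k < K, 0 < W (c k)) ∧ src (c 0) = a ∧
      (∀ k, k + 1 < K → tgt (c k) = src (c (k + 1))) ∧ tgt (c (K - 1)) = b := by
  induction h with
  | refl => exact Or.inl rfl
  | @tail b' c' hab hbc ih =>
    obtain ⟨e, heW, hesrc, hetgt⟩ := hbc
    rcases ih with rfl | ⟨K, hK, c, hc1, hc2, hc3, hc4⟩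
    · refine Or.inr ⟨1, le_refl 1, fun _ => e, ?_, hesrc, ?_, hetgt⟩
      · intro k _; exact heW
      · intro k hk; omega
    · refine Or.inr ⟨K + 1, by omega, fun k => if k < K then c k else e, ?_, ?_, ?_, ?_⟩
      · intro k hk
        by_cases h' : k < K
        · simpa [h'] using hc1 k h'
        · simpa [h'] using heW
      · simpa [Nat.pos_of_ne_zero, show 0 < K by omega] using hc2
      · intro k hk
        by_cases h' : k + 1 < K
        · simpa [show k < K by omega, h'] using hc3 k h'
        · have hk1 : k + 1 = K := by omega
          have hkK : k < K := by omega
          have : tgt (c k) = src e := by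
            rw [hesrc]
            have : k = K - 1 := by omega
            rw [this]; exact hc4
          simpa [hkK, show ¬ (k + 1 < K) by omega] using this
      · simp only [Nat.add_sub_cancel, lt_irrefl, if_neg (lt_irrefl K)]
        exact hetgt

/-- Fast–slow network: the subgraph `(V₀, R_fcyc)` of fast edges emanating from `V₀`
consists purely of cycles: every `r ∈ R_fcyc := {r ∈ R_fast : r₋ ∈ V₀}` is the first
edge of a cycle `r¹, …, r^K ∈ R_fcyc` with `r^k₊ = r^{k+1}₋` and `r^K₊ = r¹₋`.
Here `(V,R)` is a finite directed graph with edge partition `R = R_slow ⊔ R_fast`,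
rates `κ > 0` scaled by `1/ε` on fast edges, and `π^ε` is the normalised stationary
distribution, with `π^ε_x → π_x > 0` on `V₀` and `π^ε_x/ε → π̃_x > 0` on `V₁`. -/
theorem fast_cycle_edges_form_cycles
    {V R : Type*} [Fintype V] [Fintype R] [DecidableEq V] [DecidableEq R]
    (src tgt : R → V)
    (Rslow Rfast : Finset R)
    (hRdisj : Disjoint Rslow Rfast) (hRunion : Rslow ∪ Rfast = Finset.univ)
    (κ : R → ℝ) (hκ : ∀ r, 0 < κ r)
    (πeps : ℝ → V → ℝ)
    (hπpos : ∀ ε : ℝ, 0 < ε → ∀ x, 0 < πeps ε x)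
    (hnorm : ∀ ε : ℝ, 0 < ε → ∑ x, πeps ε x = 1)
    (hstat : ∀ ε : ℝ, 0 < ε → ∀ x : V,
      πeps ε x * (∑ r ∈ Finset.univ.filter (fun r => src r = x),
          (if r ∈ Rslow then κ r else κ r / ε))
        = ∑ r ∈ Finset.univ.filter (fun r => tgt r = x),
            (if r ∈ Rslow then κ r else κ r / ε) * πeps ε (src r))
    (V0 V1 : Finset V)
    (hVdisj : Disjoint V0 V1) (hVunion : V0 ∪ V1 = Finset.univ)
    (πlim πtilde : V → ℝ)
    (hV0 : ∀ x ∈ V0, 0 < πlim x ∧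
      Tendsto (fun ε => πeps ε x) (nhdsWithin 0 (Set.Ioi 0)) (nhds (πlim x)))
    (hV1 : ∀ x ∈ V1, 0 < πtilde x ∧
      Tendsto (fun ε => πeps ε x / ε) (nhdsWithin 0 (Set.Ioi 0)) (nhds (πtilde x))) :
    ∀ r : R, r ∈ Rfast → src r ∈ V0 →
      ∃ K : ℕ, 1 ≤ K ∧ ∃ c : ℕ → R,
        c 0 = r ∧
        (∀ k < K, c k ∈ Rfast ∧ src (c k) ∈ V0) ∧
        (∀ k, k + 1 < K → tgt (c k) = src (c (k + 1))) ∧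
        tgt (c (K - 1)) = src r := by
  classical
  intro r hrfast hrV0
  -- limiting distribution
  set plim : V → ℝ := fun x => if x ∈ V0 then πlim x else 0 with hplim_def
  have hεlim : Tendsto (fun ε : ℝ => ε) (nhdsWithin 0 (Set.Ioi 0)) (nhds 0) :=
    tendsto_id.mono_left nhdsWithin_le_nhds
  have hplim : ∀ x, Tendsto (fun ε => πeps ε x) (nhdsWithin (0:ℝ) (Set.Ioi 0)) (nhds (plim x)) := by
    intro x
    by_cases hx : x ∈ V0
    · simpa [hplim_def, hx] using (hV0 x hx).2
    · have hx1 : x ∈ V1 := by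
        have : x ∈ V0 ∪ V1 := by rw [hVunion]; exact Finset.mem_univ x
        rcases Finset.mem_union.1 this with h | h
        · exact absurd h hx
        · exact h
      have h0 : Tendsto (fun ε => πeps ε x / ε * ε) (nhdsWithin (0:ℝ) (Set.Ioi 0))
          (nhds (πtilde x * 0)) := (hV1 x hx1).2.mul hεlim
      rw [mul_zero] at h0
      have : (fun ε : ℝ => πeps ε x / ε * ε) =ᶠ[nhdsWithin (0:ℝ) (Set.Ioi 0)]
          fun ε => πeps ε x := by
        filter_upwards [self_mem_nhdsWithin] with ε hε
        exact div_mul_cancel₀ _ (ne_of_gt hε)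
      simpa [hplim_def, hx] using h0.congr' this
  have hplim_nonneg : ∀ x, 0 ≤ plim x := by
    intro x
    by_cases hx : x ∈ V0
    · simp [hplim_def, hx, (hV0 x hx).1.le]
    · simp [hplim_def, hx]
  -- the limiting weights
  set W : R → ℝ := fun e => (if e ∈ Rslow then 0 else κ e) * plim (src e) with hW_def
  have hW_nonneg : ∀ e, 0 ≤ W e := by
    intro e
    by_cases he : e ∈ Rslow
    · simp [hW_def, he]
    · simp only [hW_def, he, if_false]
      exact mul_nonneg (hκ e).le (hplim_nonneg _)
  have hW_pos : ∀ e, e ∈ Rfast → src e ∈ V0 → 0 < W e := by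
    intro e he hse
    have hns : e ∉ Rslow := fun h => (Finset.disjoint_left.1 hRdisj) h he
    simp only [hW_def, hns, if_false, hplim_def, hse, if_true]
    exact mul_pos (hκ e) (hV0 _ hse).1
  have hW_pos_mem : ∀ e, 0 < W e → e ∈ Rfast ∧ src e ∈ V0 := by
    intro e he
    by_cases hs : e ∈ Rslow
    · simp [hW_def, hs] at he
    by_cases hv : src e ∈ V0
    · refine ⟨?_, hv⟩
      have : e ∈ Rslow ∪ Rfast := by rw [hRunion]; exact Finset.mem_univ e
      rcases Finset.mem_union.1 this with h | h
      · exact absurd h hs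
      · exact h
    · simp [hW_def, hs, hplim_def, hv] at he
  -- the limiting balance equations
  have key : ∀ x : V,
      (∑ e ∈ Finset.univ.filter (fun e => src e = x), W e)
        = ∑ e ∈ Finset.univ.filter (fun e => tgt e = x), W e := by
    intro x
    have hf : Tendsto (fun ε : ℝ => πeps ε x *
        ∑ e ∈ Finset.univ.filter (fun e => src e = x),
          (if e ∈ Rslow then ε * κ e else κ e))
        (nhdsWithin (0:ℝ) (Set.Ioi 0))
        (nhds (plim x * ∑ e ∈ Finset.univ.filter (fun e => src e = x),
          (if e ∈ Rslow then 0 else κ e))) := by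
      refine (hplim x).mul (tendsto_finset_sum _ fun e _ => ?_)
      by_cases he : e ∈ Rslow
      · simpa [he] using hεlim.mul_const (κ e)
      · simpa [he] using (tendsto_const_nhds : Tendsto (fun _ : ℝ => κ e) _ _)
    have hg : Tendsto (fun ε : ℝ =>
        ∑ e ∈ Finset.univ.filter (fun e => tgt e = x),
          (if e ∈ Rslow then ε * κ e else κ e) * πeps ε (src e))
        (nhdsWithin (0:ℝ) (Set.Ioi 0))
        (nhds (∑ e ∈ Finset.univ.filter (fun e => tgt e = x), W e)) := by
      refine tendsto_finset_sum _ fun e _ => ?_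
      by_cases he : e ∈ Rslow
      · simpa [hW_def, he] using (hεlim.mul_const (κ e)).mul (hplim (src e))
      · simpa [hW_def, he] using
          ((tendsto_const_nhds : Tendsto (fun _ : ℝ => κ e) _ _).mul (hplim (src e)))
    have heq : (fun ε : ℝ => πeps ε x *
        ∑ e ∈ Finset.univ.filter (fun e => src e = x),
          (if e ∈ Rslow then ε * κ e else κ e))
        =ᶠ[nhdsWithin (0:ℝ) (Set.Ioi 0)]
        (fun ε : ℝ => ∑ e ∈ Finset.univ.filter (fun e => tgt e = x),
          (if e ∈ Rslow then ε * κ e else κ e) * πeps ε (src e)) := by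
      filter_upwards [self_mem_nhdsWithin] with ε hε
      have hε0 : (ε:ℝ) ≠ 0 := ne_of_gt hε
      have h1 : (∑ e ∈ Finset.univ.filter (fun e => src e = x),
          (if e ∈ Rslow then ε * κ e else κ e))
          = ε * ∑ e ∈ Finset.univ.filter (fun e => src e = x),
            (if e ∈ Rslow then κ e else κ e / ε) := by
        rw [Finset.mul_sum]
        refine Finset.sum_congr rfl fun e _ => ?_
        by_cases he : e ∈ Rslow
        · simp [he]
        · simp [he, mul_div_cancel₀ _ hε0]
      have h2 : ∀ e : R, (if e ∈ Rslow then ε * κ e else κ e)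
          = ε * (if e ∈ Rslow then κ e else κ e / ε) := by
        intro e
        by_cases he : e ∈ Rslow
        · simp [he]
        · simp [he, mul_div_cancel₀ _ hε0]
      calc πeps ε x * ∑ e ∈ Finset.univ.filter (fun e => src e = x),
            (if e ∈ Rslow then ε * κ e else κ e)
          = ε * (πeps ε x * ∑ e ∈ Finset.univ.filter (fun e => src e = x),
            (if e ∈ Rslow then κ e else κ e / ε)) := by rw [h1]; ring
        _ = ε * ∑ e ∈ Finset.univ.filter (fun e => tgt e = x),
            (if e ∈ Rslow then κ e else κ e / ε) * πeps ε (src e) := by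
              rw [hstat ε hε x]
        _ = ∑ e ∈ Finset.univ.filter (fun e => tgt e = x),
            (if e ∈ Rslow then ε * κ e else κ e) * πeps ε (src e) := by
              rw [Finset.mul_sum]
              exact Finset.sum_congr rfl fun e _ => by rw [h2 e]; ring
    have := tendsto_nhds_unique (hf.congr' heq) hg
    rw [← this]
    rw [Finset.mul_sum]
    refine Finset.sum_congr rfl fun e he => ?_
    have hse : src e = x := (Finset.mem_filter.1 he).2
    simp only [hW_def, hse]
    ring
  -- reachability set from tgt r
  set stepR : V → V → Prop := fun u v => ∃ e, 0 < W e ∧ src e = u ∧ tgt e = v with hstep_def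
  set S : Finset V := Finset.univ.filter (fun y => Relation.ReflTransGen stepR (tgt r) y)
    with hS_def
  have htgtS : tgt r ∈ S := by
    simp only [hS_def, Finset.mem_filter, Finset.mem_univ, true_and]
    exact Relation.ReflTransGen.refl
  have hS_closed : ∀ e, 0 < W e → src e ∈ S → tgt e ∈ S := by
    intro e heW hes
    simp only [hS_def, Finset.mem_filter, Finset.mem_univ, true_and] at hes ⊢
    exact hes.tail ⟨e, heW, rfl, rfl⟩
  -- the sum argument: src r ∈ S
  have hsrcS : src r ∈ S := by
    by_contra hsrc
    have hAB : (∑ e ∈ Finset.univ.filter (fun e => src e ∈ S), W e)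
        = ∑ e ∈ Finset.univ.filter (fun e => tgt e ∈ S), W e := by
      rw [← Finset.sum_fiberwise_eq_sum_filter Finset.univ S src W,
        ← Finset.sum_fiberwise_eq_sum_filter Finset.univ S tgt W]
      exact Finset.sum_congr rfl fun x _ => key x
    set A' : Finset R := Finset.univ.filter (fun e => src e ∈ S ∧ 0 < W e) with hA'_def
    have hA'A : (∑ e ∈ A', W e) = ∑ e ∈ Finset.univ.filter (fun e => src e ∈ S), W e := by
      rw [hA'_def, ← Finset.filter_filter]
      exact Finset.sum_filter_of_ne fun e he hne =>
        lt_of_le_of_ne (hW_nonneg e) (Ne.symm hne)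
    have hA'B : A' ⊆ Finset.univ.filter (fun e => tgt e ∈ S) := by
      intro e he
      simp only [hA'_def, Finset.mem_filter, Finset.mem_univ, true_and] at he ⊢
      exact hS_closed e he.2 he.1
    have hrB : r ∈ Finset.univ.filter (fun e => tgt e ∈ S) := by
      simp only [Finset.mem_filter, Finset.mem_univ, true_and]
      exact htgtS
    have hrA' : r ∉ A' := by
      simp only [hA'_def, Finset.mem_filter, Finset.mem_univ, true_and, not_and]
      intro h; exact absurd h hsrc
    have hsub : insert r A' ⊆ Finset.univ.filter (fun e => tgt e ∈ S) :=
      Finset.insert_subset hrB hA'B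
    have hle : (∑ e ∈ insert r A', W e) ≤ ∑ e ∈ Finset.univ.filter (fun e => tgt e ∈ S), W e :=
      Finset.sum_le_sum_of_subset_of_nonneg hsub fun e _ _ => hW_nonneg e
    rw [Finset.sum_insert hrA', hA'A, hAB] at hle
    have : W r ≤ 0 := by linarith
    exact absurd this (not_le.2 (hW_pos r hrfast hrV0))
  -- extract the cycle
  have hreach : Relation.ReflTransGen stepR (tgt r) (src r) := by
    simpa [hS_def, Finset.mem_filter] using hsrcS
  rcases reach_path src tgt W hreach with heq | ⟨K, hK, c, hc1, hc2, hc3, hc4⟩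
  · refine ⟨1, le_refl 1, fun _ => r, rfl, ?_, ?_, heq⟩
    · intro k _; exact ⟨hrfast, hrV0⟩
    · intro k hk; omega
  · refine ⟨K + 1, by omega, fun k => if k = 0 then r else c (k - 1), by simp, ?_, ?_, ?_⟩
    · intro k hk
      by_cases h0 : k = 0
      · simpa [h0] using ⟨hrfast, hrV0⟩
      · have hk' : k - 1 < K := by omega
        simpa [h0] using hW_pos_mem _ (hc1 _ hk')
    · intro k hk
      by_cases h0 : k = 0
      · subst h0
        simpa using hc2.symm
      · have h1 : k - 1 + 1 < K := by omega
        have := hc3 (k - 1) h1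
        have hkk : k - 1 + 1 = k := by omega
        rw [hkk] at this
        simpa [h0, show ¬ (k + 1 = 0) by omega] using this
    · have hK0 : K ≠ 0 := by omega
      simpa [hK0] using hc4
end
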